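/- 2-factor approximation: if b is a belt assignment satisfying Property (E) and Property (F), then for every belt assignment b' of the same instance, M(b) ≤ 2·M(b'). In particular, the makespan of b is at most twice the optimal makespan. -/

import Mathlib

open Finset

variable {α : Type*}

/-- A mould of type `A` is injected in step `i`: `b i = A` and either `i < N`
or the slot `N` steps earlier did not carry `A`. -/
def Injected (N : ℕ) (b : ℕ → Option α) (A : α) (i : ℕ) : Prop :=
  b i = some A ∧ (i < N ∨ b (i - N) ≠ some A)

/-- The number of moulds of type `A` used by the belt function `b`. -/
noncomputable def MouldsUsed (N : ℕ) (b : ℕ → Option α) (A : α) : ℕ :=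
  {i | Injected N b A i}.ncard

/-- A belt assignment: (i) each type `A` occurs exactly `d A` times, (ii) an
injected mould stays on the belt (period `N`) until the demand of its type is
met, (iii) at most `c A` moulds of type `A` are used. -/
def IsBeltAssignment (N : ℕ) (d c : α → ℕ) (b : ℕ → Option α) : Prop :=
  (∀ A : α, {i | b i = some A}.Finite) ∧
  (∀ A : α, {i | b i = some A}.ncard = d A) ∧
  (∀ (i : ℕ) (A : α), b i = some A →
      b (i + N) = some A ∨ {j | b j = some A ∧ j < i + N}.ncard = d A) ∧
  (∀ A : α, MouldsUsed N b A ≤ c A)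

/-- The makespan of `b`: the smallest `s` such that for every type `A` all of
its demand appears among steps `0, …, s - N - 1`. -/
noncomputable def Makespan (N : ℕ) (d : α → ℕ) (b : ℕ → Option α) : ℕ :=
  sInf {s | ∀ A : α, {j | b j = some A ∧ j < s - N}.ncard = d A}

/-- Property (E): every injection happens before every empty slot. -/
def PropE (N : ℕ) (b : ℕ → Option α) : Prop :=
  ∀ (A : α) (i e : ℕ), Injected N b A i → b e = none → i < e

/-- Property (F): if there is an empty slot `e` and strictly fewer than `c A`
moulds of type `A` are used, then `A` does not occur at any step `i ≥ e`. -/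
def PropF (N : ℕ) (c : α → ℕ) (b : ℕ → Option α) : Prop :=
  ∀ (e : ℕ) (A : α), b e = none → MouldsUsed N b A < c A → ∀ i, e ≤ i → b i ≠ some A

open Classical in
/-- The injection step responsible for the occurrence at step `i`. -/
noncomputable def chainRoot (N : ℕ) (b : ℕ → Option α) (A : α) (i : ℕ) : ℕ :=
  if h : Injected N b A i ∨ i < N ∨ N = 0 then i else chainRoot N b A (i - N)
termination_by i
decreasing_by push_neg at h; omega

lemma chainRoot_spec (N : ℕ) (hN : 0 < N) (b : ℕ → Option α) (A : α) :
    ∀ i, b i = some A → Injected N b A (chainRoot N b A i) ∧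
      chainRoot N b A i ≤ i ∧ N ∣ (i - chainRoot N b A i) := by
  intro i
  induction i using Nat.strong_induction_on with
  | _ i ih =>
    intro hbi
    rw [chainRoot]
    split
    · rename_i h
      refine ⟨?_, le_refl _, by simp⟩
      rcases h with h | h | h
      · exact h
      · exact ⟨hbi, Or.inl h⟩
      · omega
    · rename_i h
      push_neg at h
      obtain ⟨h1, h2, h3⟩ := h
      have hbiN : b (i - N) = some A := by
        by_contra hne
        exact h1 ⟨hbi, Or.inr hne⟩
      have := ih (i - N) (by omega) hbiN
      refine ⟨this.1, by omega, ?_⟩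
      obtain ⟨k, hk⟩ := this.2.2
      have hle := this.2.1
      refine ⟨k + 1, ?_⟩
      have hx : N * (k + 1) = N * k + N := by ring
      omega

lemma mkset_mem (N : ℕ) (d : α → ℕ) (b : ℕ → Option α)
    (hcount : ∀ A : α, {i | b i = some A}.ncard = d A)
    (L : ℕ) (hL : ∀ i B, b i = some B → i ≤ L) :
    ∀ A : α, {j | b j = some A ∧ j < (L + N + 1) - N}.ncard = d A := by
  intro A
  have h2 : {j | b j = some A ∧ j < (L + N + 1) - N} = {i | b i = some A} := by
    ext j
    simp only [Set.mem_setOf_eq, and_iff_left_iff_imp]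
    intro hj
    have := hL j A hj
    omega
  rw [h2, hcount]

lemma inj_aux (N L : ℕ) (b : ℕ → Option α) (A : α)
    (persistIter : ∀ k j, b j = some A → j + N * k ≤ L → b (j + N * k) = some A)
    {j j' q q' w : ℕ} (h1 : w = j + N * q) (h2 : w = j' + N * q') (hwL : w ≤ L)
    (hbj : b j = some A) (hinj' : Injected N b A j') (hlt : j < j') : False := by
  have hq : q' < q := by
    by_contra h
    have h4 : N * q ≤ N * q' := Nat.mul_le_mul_left N (by omega)
    omega
  obtain ⟨m, hm⟩ : ∃ m, q = q' + m + 1 := ⟨q - q' - 1, by omega⟩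
  have hexp : N * q = N * q' + (N * m + N) := by rw [hm]; ring
  have hj' : j' = (j + N * m) + N := by omega
  have hb2 : b (j + N * m) = some A := persistIter m j hbj (by omega)
  rcases hinj'.2 with h | h
  · omega
  · apply h
    rw [show j' - N = j + N * m by omega]
    exact hb2

/-- **Observation 6 (2-factor approximation).** A belt assignment satisfying
Properties (E) and (F) has makespan at most twice that of any belt
assignment of the same instance; in particular at most twice the optimum. -/
theorem statement10 (N : ℕ) (hN : 0 < N)
    (d c : α → ℕ) (hd : ∀ A, 0 < d A) (hc : ∀ A, 0 < c A)
    (b b' : ℕ → Option α) (hb : IsBeltAssignment N d c b)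
    (hE : PropE N b) (hF : PropF N c b)
    (hb' : IsBeltAssignment N d c b') :
    Makespan N d b ≤ 2 * Makespan N d b' := by
  classical
  obtain ⟨hfin, hcount, hrule, hcap⟩ := hb
  obtain ⟨hfin', hcount', hrule', hcap'⟩ := hb'
  cases finite_or_infinite α with
  | inr hinf =>
    have hempty : {s | ∀ A : α, {j | b j = some A ∧ j < s - N}.ncard = d A} = ∅ := by
      rw [Set.eq_empty_iff_forall_notMem]
      intro s hs
      have hch : ∀ A : α, ∃ i, b i = some A ∧ i < s - N := by
        intro A
        have h1 := hs A
        have h2 : {j | b j = some A ∧ j < s - N}.Nonempty := by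
          rw [Set.nonempty_iff_ne_empty]
          intro h
          rw [h, Set.ncard_empty] at h1
          have := hd A
          omega
        exact h2
      choose f hf1 hf2 using hch
      have hfi : Function.Injective f := by
        intro A B hAB
        have h5 := hf1 A
        rw [hAB, hf1 B] at h5
        exact (Option.some_inj.mp h5).symm
      haveI := (Set.finite_Iio (s - N)).to_subtype
      haveI : Finite α := Finite.of_injective (fun A => (⟨f A, hf2 A⟩ : Set.Iio (s - N)))
        (fun A B h => hfi (congrArg Subtype.val h))
      exact not_finite α
    unfold Makespan
    rw [hempty, Nat.sInf_empty]
    omega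
  | inl hfinα =>
    have _inst := Fintype.ofFinite α
    rcases isEmpty_or_nonempty α with hα | hα
    · have h0 : (0:ℕ) ∈ {s | ∀ A : α, {j | b j = some A ∧ j < s - N}.ncard = d A} := by
        intro A
        exact (hα.false A).elim
      have : Makespan N d b = 0 := Nat.eq_zero_of_le_zero (Nat.sInf_le h0)
      omega
    -- main case : α finite and nonempty
    · -- occupied slots of b
      set occ : α → Finset ℕ := fun A => (hfin A).toFinset with hoccdef
      have hoccmem : ∀ (A : α) (i : ℕ), i ∈ occ A ↔ b i = some A := by
        intro A i
        simp [hoccdef, Set.Finite.mem_toFinset]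
      have hoccA : ∀ A, (occ A).card = d A := by
        intro A
        rw [hoccdef]
        rw [← Set.ncard_eq_toFinset_card _ (hfin A), hcount]
      set U : Finset ℕ := Finset.univ.biUnion occ with hUdef
      have hUmem : ∀ i, i ∈ U ↔ ∃ B, b i = some B := by
        intro i
        rw [hUdef]
        constructor
        · intro h
          obtain ⟨B, _, hB⟩ := Finset.mem_biUnion.mp h
          exact ⟨B, (hoccmem B i).mp hB⟩
        · rintro ⟨B, hB⟩
          exact Finset.mem_biUnion.mpr ⟨B, Finset.mem_univ B, (hoccmem B i).mpr hB⟩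
      have hUcard : U.card = ∑ A : α, d A := by
        rw [hUdef, Finset.card_biUnion]
        · exact Finset.sum_congr rfl fun A _ => hoccA A
        · intro x _ y _ hxy
          rw [Function.onFun, Finset.disjoint_left]
          intro i hx hy
          rw [hoccmem] at hx hy
          rw [hx] at hy
          exact hxy (Option.some_inj.mp hy)
      set D := ∑ A : α, d A with hDdef
      have hD1 : 1 ≤ D := by
        obtain ⟨A0⟩ := hα
        calc 1 ≤ d A0 := hd A0
        _ ≤ D := Finset.single_le_sum (f := d) (fun a _ => Nat.zero_le _) (Finset.mem_univ A0)
      have hUne : U.Nonempty := Finset.card_pos.mp (by rw [hUcard]; omega)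
      set L := U.max' hUne with hLdef
      obtain ⟨A, hA⟩ := (hUmem L).mp (U.max'_mem hUne)
      have hLtop : ∀ i B, b i = some B → i ≤ L := by
        intro i B hiB
        exact U.le_max' i ((hUmem i).mpr ⟨B, hiB⟩)
      have hLnone : b (L + 1) = none := by
        cases hbl : b (L + 1) with
        | none => rfl
        | some B => have := hLtop _ _ hbl; omega
      have hex : ∃ i, b i = none := ⟨L + 1, hLnone⟩
      set e := Nat.find hex with hedef
      have hee : b e = none := Nat.find_spec hex
      have heL1 : e ≤ L + 1 := Nat.find_le hLnone
      have heocc : ∀ i, i < e → ∃ B, b i = some B := by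
        intro i hi
        have hmin := Nat.find_min hex hi
        cases hbi : b i with
        | none => exact absurd hbi hmin
        | some B => exact ⟨B, rfl⟩
      have heD : e ≤ D := by
        calc e = (Finset.range e).card := (Finset.card_range e).symm
        _ ≤ U.card := Finset.card_le_card (by
            intro i hi
            rw [Finset.mem_range] at hi
            exact (hUmem i).mpr (heocc i hi))
        _ = D := hUcard
      -- upper bound on the makespan of b
      have hMb : Makespan N d b ≤ L + N + 1 :=
        Nat.sInf_le (mkset_mem N d b hcount L hLtop)
      -- the makespan of b' is attained
      have hU'f : {i | ∃ B, b' i = some B}.Finite := by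
        have hsub : {i | ∃ B, b' i = some B} ⊆
            ⋃ B ∈ (Finset.univ : Finset α), {i | b' i = some B} := by
          rintro i ⟨B, hB⟩
          exact Set.mem_biUnion (Finset.mem_univ B) hB
        exact ((Finset.univ : Finset α).finite_toSet.biUnion (fun B _ => hfin' B)).subset hsub
      obtain ⟨L', hL'⟩ : ∃ L', ∀ i B, b' i = some B → i ≤ L' := by
        obtain ⟨L', hL'⟩ := hU'f.bddAbove
        exact ⟨L', fun i B hiB => hL' ⟨B, hiB⟩⟩
      set s := Makespan N d b' with hsdef
      have hne' : {t | ∀ A : α, {j | b' j = some A ∧ j < t - N}.ncard = d A}.Nonempty :=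
        ⟨L' + N + 1, mkset_mem N d b' hcount' L' hL'⟩
      have hsmem : ∀ A : α, {j | b' j = some A ∧ j < s - N}.ncard = d A :=
        Nat.sInf_mem hne'
      have hocc' : ∀ i B, b' i = some B → i < s - N := by
        intro i B hiB
        have h1 := hsmem B
        have hsub : {j | b' j = some B ∧ j < s - N} ⊆ {j | b' j = some B} := fun j hj => hj.1
        have heq := Set.eq_of_subset_of_ncard_le hsub (by rw [h1, hcount']) (hfin' B)
        have : i ∈ {j | b' j = some B ∧ j < s - N} := by rw [heq]; exact hiB
        exact this.2
      -- total demand fits below s - N in b'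
      have hDs : D ≤ s - N := by
        set occ' : α → Finset ℕ := fun A => (hfin' A).toFinset with hocc'def
        have hocc'mem : ∀ (A : α) (i : ℕ), i ∈ occ' A ↔ b' i = some A := by
          intro A i
          simp [hocc'def, Set.Finite.mem_toFinset]
        have hU'card : (Finset.univ.biUnion occ').card = D := by
          rw [Finset.card_biUnion]
          · rw [hDdef]
            refine Finset.sum_congr rfl fun A _ => ?_
            rw [hocc'def, ← Set.ncard_eq_toFinset_card _ (hfin' A), hcount']
          · intro x _ y _ hxy
            rw [Function.onFun, Finset.disjoint_left]
            intro i hx hy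
            rw [hocc'mem] at hx hy
            rw [hx] at hy
            exact hxy (Option.some_inj.mp hy)
        calc D = (Finset.univ.biUnion occ').card := hU'card.symm
        _ ≤ (Finset.range (s - N)).card := Finset.card_le_card (by
            intro i hi
            rw [Finset.mem_biUnion] at hi
            obtain ⟨B, _, hB⟩ := hi
            rw [Finset.mem_range]
            exact hocc' i B ((hocc'mem B i).mp hB))
        _ = s - N := Finset.card_range _
      have hsD : D + N ≤ s := by omega
      rcases Nat.lt_or_ge L e with hcase | hcase
      · -- no empty slot before L + 1 : the belt is full
        omega
      · -- e ≤ L : the main case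
        have hinjE : ∀ i, Injected N b A i → i < e := fun i hi => hE A i e hi hee
        have hbLA : b L = some A := hA
        have persist : ∀ i, b i = some A → i + N ≤ L → b (i + N) = some A := by
          intro i hi hiN
          rcases hrule i A hi with h | h
          · exact h
          · exfalso
            have hsub : {j | b j = some A ∧ j < i + N} ⊆ {j | b j = some A} := fun j hj => hj.1
            have heq := Set.eq_of_subset_of_ncard_le hsub (by rw [h, hcount]) (hfin A)
            have hLmem : L ∈ {j | b j = some A ∧ j < i + N} := by rw [heq]; exact hbLA
            have := hLmem.2
            omega
        have persistIter : ∀ k j, b j = some A → j + N * k ≤ L → b (j + N * k) = some A := by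
          intro k
          induction k with
          | zero => intro j hj _; simpa using hj
          | succ k ih =>
            intro j hj hjk
            have harr : N * (k + 1) = N * k + N := by ring
            have h1 : b (j + N * k) = some A := ih j hj (by omega)
            have h2 := persist (j + N * k) h1 (by omega)
            rw [show j + N * (k + 1) = j + N * k + N by omega]
            exact h2
        -- at least c A moulds of type A are used in b
        have hIfin : {i | Injected N b A i}.Finite := (hfin A).subset (fun i hi => hi.1)
        set J := hIfin.toFinset with hJdef
        have hJmem : ∀ i, i ∈ J ↔ Injected N b A i := fun i => hIfin.mem_toFinset
        have hcAJ : c A ≤ J.card := by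
          by_contra hlt
          push_neg at hlt
          have hMlt : MouldsUsed N b A < c A := by
            rw [MouldsUsed, Set.ncard_eq_toFinset_card _ hIfin]
            exact hlt
          exact hF e A hee hMlt L hcase hbLA
        obtain ⟨T, r, hTr, hr⟩ : ∃ T r, L - e = N * T + r ∧ r < N :=
          ⟨(L - e) / N, (L - e) % N, (Nat.div_add_mod (L - e) N).symm, Nat.mod_lt _ hN⟩
        set F := (hfin A).toFinset with hFdef
        have hFmem : ∀ i, i ∈ F ↔ b i = some A := fun i => (hfin A).mem_toFinset
        have hFcard : F.card = d A := by
          rw [hFdef, ← Set.ncard_eq_toFinset_card _ (hfin A), hcount]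
        -- each window of length N below L and above e carries at least c A occurrences of A
        have hwin : ∀ t, t ≤ T → c A ≤ (F.filter fun i => (L - i) / N = t).card := by
          intro t ht
          have htN : N * t ≤ L - e := le_trans (Nat.mul_le_mul_left N ht) (by omega)
          refine le_trans hcAJ (Finset.card_le_card_of_injOn
            (fun j => j + N * ((L - N * t - j) / N)) ?_ ?_)
          · intro j hjJ
            have hjinj : Injected N b A j := (hJmem j).mp hjJ
            have hje : j < e := hinjE j hjinj
            have hue : e ≤ L - N * t := by omega
            set q := (L - N * t - j) / N with hq
            set r2 := (L - N * t - j) % N with hr2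
            have hdm : N * q + r2 = L - N * t - j := Nat.div_add_mod _ _
            have hrlt : r2 < N := Nat.mod_lt _ hN
            rw [Finset.mem_coe, Finset.mem_filter]
            constructor
            · rw [hFmem]
              exact persistIter q j hjinj.1 (by omega)
            · have h9 : L - (j + N * q) = N * t + r2 := by omega
              rw [h9, Nat.mul_add_div hN, Nat.div_eq_of_lt hrlt]
              omega
          · intro x hx y hy hxy
            simp only [Finset.mem_coe] at hx hy
            have hxinj : Injected N b A x := (hJmem x).mp hx
            have hyinj : Injected N b A y := (hJmem y).mp hy
            have hxe : x < e := hinjE x hxinj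
            have hye : y < e := hinjE y hyinj
            have hue : e ≤ L - N * t := by omega
            simp only at hxy
            set qx := (L - N * t - x) / N with hqx
            set rx := (L - N * t - x) % N with hrx
            set qy := (L - N * t - y) / N with hqy
            set ry := (L - N * t - y) % N with hry
            have hdmx : N * qx + rx = L - N * t - x := Nat.div_add_mod _ _
            have hdmy : N * qy + ry = L - N * t - y := Nat.div_add_mod _ _
            by_contra hne
            rcases Nat.lt_or_ge x y with hlt | hge
            · exact inj_aux N L b A persistIter rfl hxy (by omega) hxinj.1 hyinj hlt
            · have hlt : y < x := by omega
              exact inj_aux N L b A persistIter rfl hxy.symm (by omega) hyinj.1 hxinj hlt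
        -- summing over the T + 1 disjoint windows
        have hsum : (T + 1) * c A ≤ d A := by
          set F1 := F.filter (fun i => (L - i) / N ≤ T) with hF1def
          have hmap : ∀ i ∈ F1, (L - i) / N ∈ Finset.range (T + 1) := by
            intro i hi
            rw [Finset.mem_range]
            have := (Finset.mem_filter.mp hi).2
            omega
          have h1 : F1.card = ∑ t ∈ Finset.range (T + 1),
              (F1.filter fun i => (L - i) / N = t).card :=
            Finset.card_eq_sum_card_fiberwise hmap
          have h2 : ∀ t ∈ Finset.range (T + 1),
              c A ≤ (F1.filter fun i => (L - i) / N = t).card := by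
            intro t ht
            rw [Finset.mem_range] at ht
            have hfe : F1.filter (fun i => (L - i) / N = t)
                = F.filter (fun i => (L - i) / N = t) := by
              rw [hF1def, Finset.filter_filter]
              refine Finset.filter_congr fun i _ => ?_
              constructor
              · exact fun h => h.2
              · exact fun h => ⟨by omega, h⟩
            rw [hfe]
            exact hwin t (by omega)
          calc (T + 1) * c A = (Finset.range (T + 1)).card * c A := by rw [Finset.card_range]
          _ ≤ ∑ t ∈ Finset.range (T + 1), (F1.filter fun i => (L - i) / N = t).card := by
              have := Finset.card_nsmul_le_sum (Finset.range (T + 1))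
                (fun t => (F1.filter fun i => (L - i) / N = t).card) (c A) h2
              simpa [smul_eq_mul] using this
          _ = F1.card := h1.symm
          _ ≤ F.card := Finset.card_le_card (Finset.filter_subset _ _)
          _ = d A := hFcard
        -- a long chain in b'
        set F' := (hfin' A).toFinset with hF'def
        have hF'mem : ∀ i, i ∈ F' ↔ b' i = some A := fun i => (hfin' A).mem_toFinset
        have hF'card : F'.card = d A := by
          rw [hF'def, ← Set.ncard_eq_toFinset_card _ (hfin' A), hcount']
        have hI'fin : {i | Injected N b' A i}.Finite := (hfin' A).subset (fun i hi => hi.1)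
        set J' := hI'fin.toFinset with hJ'def
        have hJ'card : J'.card ≤ c A := by
          rw [hJ'def, ← Set.ncard_eq_toFinset_card _ hI'fin]
          exact hcap' A
        have hroot := chainRoot_spec N hN b' A
        have hmaps : ∀ i ∈ F', chainRoot N b' A i ∈ J' := by
          intro i hi
          rw [hJ'def, Set.Finite.mem_toFinset]
          exact (hroot i ((hF'mem i).mp hi)).1
        have hF'ne : F'.Nonempty := Finset.card_pos.mp (by rw [hF'card]; exact hd A)
        have hJ'ne : J'.Nonempty := by
          obtain ⟨x, hx⟩ := hF'ne
          exact ⟨_, hmaps x hx⟩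
        obtain ⟨j0, hj0J, hfib⟩ :=
          Finset.exists_le_card_fiber_of_mul_le_card_of_maps_to hmaps hJ'ne
            (show J'.card * (T + 1) ≤ F'.card by
              calc J'.card * (T + 1) ≤ c A * (T + 1) := Nat.mul_le_mul_right _ hJ'card
              _ = (T + 1) * c A := Nat.mul_comm _ _
              _ ≤ d A := hsum
              _ = F'.card := hF'card.symm)
        set Φ := F'.filter (fun x => chainRoot N b' A x = j0) with hΦdef
        have hΦel : ∀ x ∈ Φ, b' x = some A ∧ j0 ≤ x ∧ N ∣ (x - j0) := by
          intro x hx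
          rw [hΦdef, Finset.mem_filter] at hx
          obtain ⟨hx1, hx2⟩ := hx
          have hb'x := (hF'mem x).mp hx1
          have h5 := hroot x hb'x
          rw [hx2] at h5
          exact ⟨hb'x, h5.2.1, h5.2.2⟩
        have hbig : ∃ x ∈ Φ, N * T ≤ x := by
          by_contra hcon
          push_neg at hcon
          have hinj2 : Set.InjOn (fun x => (x - j0) / N) Φ := by
            intro x hx y hy hxy
            simp only [Finset.mem_coe] at hx hy
            obtain ⟨_, hx1, kx, hkx⟩ := hΦel x hx
            obtain ⟨_, hy1, ky, hky⟩ := hΦel y hy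
            simp only at hxy
            rw [hkx, hky, Nat.mul_div_cancel_left _ hN, Nat.mul_div_cancel_left _ hN] at hxy
            rw [hxy] at hkx
            omega
          have hcard2 : Φ.card ≤ T := by
            have hmap2 : ∀ x ∈ Φ, (x - j0) / N ∈ Finset.range T := by
              intro x hx
              obtain ⟨_, hx1, kx, hkx⟩ := hΦel x hx
              rw [Finset.mem_range, hkx, Nat.mul_div_cancel_left _ hN]
              have hxT := hcon x hx
              by_contra hk
              push_neg at hk
              have := Nat.mul_le_mul_left N hk
              omega
            have := Finset.card_le_card_of_injOn _ hmap2 hinj2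
            simpa [Finset.card_range] using this
          omega
        obtain ⟨x, hxΦ, hxT⟩ := hbig
        have hxs : x < s - N := hocc' x A (hΦel x hxΦ).1
        omega
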